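/- For every infinite cardinal λ there exists a family (T_i)_{i<λ} of λ special subtrees of λ^{<ω} that are pairwise non-back-and-forth-equivalent: for i ≠ j, the structures (T_i, ⊴) and (T_j, ⊴) are not ≡∞ℵ₀-equivalent. -/

import Mathlib

noncomputable section

/-- a finite partial map (given by its graph `p`) between structures each with a
single binary relation is a partial isomorphism if it is functional, injective,
and preserves and reflects the relation. -/
def IsPartialIso {M N : Type*} (r : M → M → Prop) (s : N → N → Prop)
    (p : Finset (M × N)) : Prop :=
  (∀ x y y', (x, y) ∈ p → (x, y') ∈ p → y = y') ∧
  (∀ x x' y, (x, y) ∈ p → (x', y) ∈ p → x = x') ∧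
  (∀ x y x' y', (x, y) ∈ p → (x', y') ∈ p → (r x x' ↔ s y y'))

/-- back-and-forth equivalence (`≡∞ℵ₀`) of two structures, each consisting of a
single binary relation: a nonempty family of finite partial isomorphisms with the
back-and-forth extension property. -/
def BackForth {M N : Type*} (r : M → M → Prop) (s : N → N → Prop) : Prop :=
  ∃ F : Set (Finset (M × N)), F.Nonempty ∧
    (∀ p ∈ F, IsPartialIso r s p) ∧
    ∀ p ∈ F, ∀ a : M, ∀ b : N,
      ∃ q ∈ F, p ⊆ q ∧ (∃ b', (a, b') ∈ q) ∧ (∃ a', (a', b) ∈ q)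

/-- a subtree of `λ^{<ω}`: a nonempty set of finite sequences closed under
initial segments -/
def IsSubtree {lam : Type*} (T : Set (List lam)) : Prop :=
  T.Nonempty ∧ ∀ l ∈ T, ∀ l', l' <+: l → l' ∈ T

/-- `η` is contained in a branch of `T`: some `ν ∈ λ^ω` extends `η` with all its
finite restrictions in `T`. -/
def InBranch {lam : Type*} (T : Set (List lam)) (η : List lam) : Prop :=
  ∃ ν : ℕ → lam, (∀ n : ℕ, (List.ofFn fun i : Fin n => ν i) ∈ T) ∧
    η = List.ofFn fun i : Fin η.length => ν i

/-- `T` is special: for every `η ∈ T` contained in a branch, every immediate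
successor of `η` in `T` has a proper extension in `T`. -/
def IsSpecial {lam : Type*} (T : Set (List lam)) : Prop :=
  ∀ η ∈ T, InBranch T η →
    ∀ ν ∈ T, η <+: ν → ν.length = η.length + 1 →
      ∃ ρ ∈ T, ν <+: ρ ∧ ν ≠ ρ
section Aux

open List

variable {α : Type*}

/-- in a strictly descending chain, the last element of a longer list is below the
last element of a proper nonempty prefix. -/
private lemma aux_last_rel {r : α → α → Prop} (htr : Transitive r) {l₁ l₂ : List α}
    (hc : l₂.Chain' (fun a b => r b a)) (hp : l₁ <+: l₂) (h1 : l₁ ≠ []) (h2 : l₂ ≠ [])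
    (hlt : l₁.length < l₂.length) :
    r (l₂.getLast h2) (l₁.getLast h1) := by
  haveI : IsTrans α (fun a b => r b a) := ⟨fun a b c hab hbc => htr hbc hab⟩
  have hpw := List.isChain_iff_pairwise.mp hc
  rw [List.pairwise_iff_getElem] at hpw
  have h1l : 0 < l₁.length := List.length_pos_iff.mpr h1
  have h2l : 0 < l₂.length := List.length_pos_iff.mpr h2
  have key := hpw (l₁.length - 1) (l₂.length - 1) (by omega) (by omega) (by omega)
  rw [List.getLast_eq_getElem, List.getLast_eq_getElem]
  rw [hp.getElem (show l₁.length - 1 < l₁.length by omega)]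
  exact key

end Aux

section Trees

variable {lam : Type*}

/-- the tree of strictly `WellOrderingRel`-descending sequences starting at `i` -/
def descTree (i : lam) : Set (List lam) :=
  {l | l.Chain' (fun a b => WellOrderingRel b a) ∧ ∀ x ∈ l.head?, x = i}

lemma nil_mem_descTree (i : lam) : ([] : List lam) ∈ descTree i :=
  ⟨List.isChain_nil, by simp⟩

lemma single_mem_descTree (i : lam) : [i] ∈ descTree i :=
  ⟨List.isChain_singleton i, by simp⟩

lemma descTree_subtree (i : lam) : IsSubtree (descTree i) := by
  refine ⟨⟨[], nil_mem_descTree i⟩, fun l hl l' hl' => ?_⟩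
  refine ⟨hl.1.prefix hl', ?_⟩
  rcases eq_or_ne l' [] with rfl | hne
  · simp
  · intro x hx
    obtain ⟨t, rfl⟩ := hl'
    exact hl.2 x (by rwa [List.head?_append_of_ne_nil _ hne])

lemma descTree_special (i : lam) : IsSpecial (descTree i) := by
  intro η hη hbr
  exfalso
  obtain ⟨ν, hν, -⟩ := hbr
  have hdesc : ∀ k : ℕ, WellOrderingRel (ν (k + 1)) (ν k) := by
    intro k
    have h : List.IsChain _ _ := (hν (k + 2)).1
    rw [List.isChain_iff_getElem] at h
    have h2 := h k (by simp)
    rw [List.getElem_ofFn, List.getElem_ofFn] at h2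
    simpa using h2
  obtain ⟨a, ⟨k, hk⟩, hmin⟩ :=
    (IsWellFounded.wf (r := @WellOrderingRel lam)).has_min (Set.range ν) ⟨ν 0, 0, rfl⟩
  exact hmin (ν (k + 1)) ⟨k + 1, rfl⟩ (hk ▸ hdesc k)

lemma last_mem_descTree {i : lam} {l : List lam} (hl : l ∈ descTree i) (hne : l ≠ []) :
    l.getLast hne = i ∨ WellOrderingRel (l.getLast hne) i := by
  have hpos : 0 < l.length := List.length_pos_iff.mpr hne
  have hhead : l.head hne = i := hl.2 _ (by rw [List.head?_eq_head hne]; rfl)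
  rcases eq_or_lt_of_le (show 1 ≤ l.length from hpos) with h1 | h1
  · left
    obtain ⟨x, rfl⟩ := List.length_eq_one_iff.mp h1.symm
    simpa using hhead
  · right
    have := aux_last_rel (r := @WellOrderingRel lam)
      (fun a b c hab hbc => IsTrans.trans (r := @WellOrderingRel lam) a b c hab hbc)
      hl.1 (l₁ := [l.head hne]) ⟨l.tail, by simp⟩ (by simp) hne (by simpa using h1)
    simpa [hhead] using this

lemma append_mem_descTree {i : lam} {l : List lam} (hl : l ∈ descTree i) (hne : l ≠ [])
    {a : lam} (ha : WellOrderingRel a (l.getLast hne)) : l ++ [a] ∈ descTree i := by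
  constructor
  · refine List.isChain_append.mpr ⟨hl.1, List.isChain_singleton a, ?_⟩
    intro x hx y hy
    rw [List.getLast?_eq_getLast_of_ne_nil hne] at hx
    simp only [Option.mem_def, Option.some.injEq] at hx
    simp only [List.head?_cons, Option.mem_def, Option.some.injEq] at hy
    subst hx; subst hy
    exact ha
  · intro x hx
    rw [List.head?_append_of_ne_nil _ hne] at hx
    exact hl.2 x hx

end Trees
section Main

variable {lam : Type*}

theorem descTree_not_backForth {i j : lam} (hij : i ≠ j) :
    ¬ BackForth (fun a b : {l : List lam // l ∈ descTree i} => a.1 <+: b.1)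
      (fun a b : {l : List lam // l ∈ descTree j} => a.1 <+: b.1) := by
  rintro ⟨F, ⟨p0, hp0⟩, hiso, hext⟩
  have htr : Transitive (@WellOrderingRel lam) :=
    fun a b c hab hbc => IsTrans.trans a b c hab hbc
  -- only the root can be matched with the root
  have nilN : ∀ p ∈ F, ∀ η : {l : List lam // l ∈ descTree i},
      (η, (⟨[], nil_mem_descTree j⟩ : {l : List lam // l ∈ descTree j})) ∈ p → η.1 = [] := by
    intro p hp η hmem
    obtain ⟨q, hq, hpq, ⟨b', hb'⟩, -⟩ :=
      hext p hp ⟨[], nil_mem_descTree i⟩ ⟨[], nil_mem_descTree j⟩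
    have h1 := (hiso q hq).2.2 _ _ _ _ hb' (hpq hmem)
    have hb'nil : b'.1 = [] := List.prefix_nil.mp (h1.mp (List.nil_prefix))
    have hb'' : ((⟨[], nil_mem_descTree i⟩ : {l : List lam // l ∈ descTree i}),
        (⟨[], nil_mem_descTree j⟩ : {l : List lam // l ∈ descTree j})) ∈ q := by
      rwa [show b' = ⟨[], nil_mem_descTree j⟩ from Subtype.ext hb'nil] at hb'
    have := (hiso q hq).2.1 _ _ _ (hpq hmem) hb''
    exact congrArg Subtype.val this
  have nilM : ∀ p ∈ F, ∀ ν : {l : List lam // l ∈ descTree j},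
      ((⟨[], nil_mem_descTree i⟩ : {l : List lam // l ∈ descTree i}), ν) ∈ p → ν.1 = [] := by
    intro p hp ν hmem
    obtain ⟨q, hq, hpq, -, ⟨a', ha'⟩⟩ :=
      hext p hp ⟨[], nil_mem_descTree i⟩ ⟨[], nil_mem_descTree j⟩
    have h1 := (hiso q hq).2.2 _ _ _ _ (hpq hmem) ha'
    exact List.prefix_nil.mp (h1.mp (List.nil_prefix))
  -- the bisimulation relation on last entries
  let R : lam → lam → Prop := fun a b =>
    ∃ p ∈ F, ∃ (η : {l : List lam // l ∈ descTree i}) (ν : {l : List lam // l ∈ descTree j}),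
      (η, ν) ∈ p ∧ ∃ (hη : η.1 ≠ []) (hν : ν.1 ≠ []),
      η.1.getLast hη = a ∧ ν.1.getLast hν = b
  have fwd : ∀ a b, R a b → ∀ a', WellOrderingRel a' a →
      ∃ b', WellOrderingRel b' b ∧ R a' b' := by
    rintro a b ⟨p, hp, η, ν, hmem, hη, hν, rfl, rfl⟩ a' ha'
    have hη' : η.1 ++ [a'] ∈ descTree i := append_mem_descTree η.2 hη ha'
    obtain ⟨q, hq, hpq, ⟨ν', hν'⟩, -⟩ := hext p hp ⟨η.1 ++ [a'], hη'⟩ ν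
    have hiq := hiso q hq
    have hpre : ν.1 <+: ν'.1 :=
      (hiq.2.2 _ _ _ _ (hpq hmem) hν').mp (List.prefix_append _ _)
    have hnpre : ¬ (ν'.1 <+: ν.1) := by
      intro hcon
      have h2 := (hiq.2.2 _ _ _ _ hν' (hpq hmem)).mpr hcon
      have := h2.length_le
      simp at this
    have hlt : ν.1.length < ν'.1.length := by
      rcases lt_or_eq_of_le hpre.length_le with h | h
      · exact h
      · exact absurd (by rw [← hpre.eq_of_length h]) hnpre
    have hν'ne : ν'.1 ≠ [] := by
      intro hcon
      rw [hcon] at hlt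
      simp at hlt
    refine ⟨ν'.1.getLast hν'ne, aux_last_rel htr ν'.2.1 hpre hν hν'ne hlt,
      q, hq, ⟨η.1 ++ [a'], hη'⟩, ν', hν', by simp, hν'ne, ?_, rfl⟩
    simp
  have bwd : ∀ a b, R a b → ∀ b', WellOrderingRel b' b →
      ∃ a', WellOrderingRel a' a ∧ R a' b' := by
    rintro a b ⟨p, hp, η, ν, hmem, hη, hν, rfl, rfl⟩ b' hb'
    have hν' : ν.1 ++ [b'] ∈ descTree j := append_mem_descTree ν.2 hν hb'
    obtain ⟨q, hq, hpq, -, ⟨η', hη'⟩⟩ := hext p hp η ⟨ν.1 ++ [b'], hν'⟩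
    have hiq := hiso q hq
    have hpre : η.1 <+: η'.1 :=
      (hiq.2.2 _ _ _ _ (hpq hmem) hη').mpr (List.prefix_append _ _)
    have hnpre : ¬ (η'.1 <+: η.1) := by
      intro hcon
      have h2 := (hiq.2.2 _ _ _ _ hη' (hpq hmem)).mp hcon
      have := h2.length_le
      simp at this
    have hlt : η.1.length < η'.1.length := by
      rcases lt_or_eq_of_le hpre.length_le with h | h
      · exact h
      · exact absurd (by rw [← hpre.eq_of_length h]) hnpre
    have hη'ne : η'.1 ≠ [] := by
      intro hcon
      rw [hcon] at hlt
      simp at hlt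
    refine ⟨η'.1.getLast hη'ne, aux_last_rel htr η'.2.1 hpre hη hη'ne hlt,
      q, hq, η', ⟨ν.1 ++ [b'], hν'⟩, hη', hη'ne, by simp, rfl, ?_⟩
    simp
  -- bisimilar elements of a well-order are equal
  have main : ∀ a b, R a b → a = b := by
    intro a
    induction a using WellFounded.induction (IsWellFounded.wf (r := @WellOrderingRel lam)) with
    | _ a IH =>
    intro b hab
    have h1 : ∀ a', WellOrderingRel a' a → WellOrderingRel a' b := by
      intro a' ha'
      obtain ⟨b', hb', hR⟩ := fwd a b hab a' ha'
      rw [IH a' ha' b' hR]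
      exact hb'
    have h2 : ∀ b', WellOrderingRel b' b → WellOrderingRel b' a := by
      intro b' hb'
      obtain ⟨a', ha', hR⟩ := bwd a b hab b' hb'
      rwa [IH a' ha' b' hR] at ha'
    rcases trichotomous_of (@WellOrderingRel lam) a b with h | h | h
    · exact absurd (h2 a h) (irrefl a)
    · exact h
    · exact absurd (h1 b h) (irrefl b)
  -- start the game from ([i], [j])
  obtain ⟨q, hq, hpq, ⟨ν, hν⟩, ⟨η, hη⟩⟩ :=
    hext p0 hp0 ⟨[i], single_mem_descTree i⟩ ⟨[j], single_mem_descTree j⟩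
  have hνne : ν.1 ≠ [] := by
    intro hcon
    have h := nilN q hq _ (by
      rwa [show ν = ⟨[], nil_mem_descTree j⟩ from Subtype.ext hcon] at hν)
    simp at h
  have hηne : η.1 ≠ [] := by
    intro hcon
    have h := nilM q hq _ (by
      rwa [show η = ⟨[], nil_mem_descTree i⟩ from Subtype.ext hcon] at hη)
    simp at h
  have hRi : R i (ν.1.getLast hνne) :=
    ⟨q, hq, ⟨[i], single_mem_descTree i⟩, ν, hν, by simp, hνne, by simp, rfl⟩
  have hRj : R (η.1.getLast hηne) j :=
    ⟨q, hq, η, ⟨[j], single_mem_descTree j⟩, hη, hηne, by simp, rfl, by simp⟩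
  have e1 := main _ _ hRi
  have e2 := main _ _ hRj
  rcases last_mem_descTree ν.2 hνne with h | h
  · exact hij (e1.trans h)
  · rcases last_mem_descTree η.2 hηne with h' | h'
    · exact hij ((e2.symm.trans h').symm)
    · have hij1 : WellOrderingRel i j := by rw [e1]; exact h
      have hij2 : WellOrderingRel j i := by rw [← e2]; exact h'
      exact absurd (htr hij1 hij2) (irrefl i)

end Main
/-- for every infinite `λ` there is a family of `λ` special subtrees
of `λ^{<ω}` that are pairwise non-back-and-forth-equivalent (as structures with
the initial segment relation `⊴`). -/
theorem exists_many_special_subtrees (lam : Type*) [Infinite lam] :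
    ∃ T : lam → Set (List lam),
      (∀ i, IsSubtree (T i) ∧ IsSpecial (T i)) ∧
      ∀ i j, i ≠ j →
        ¬ BackForth (fun a b : {l : List lam // l ∈ T i} => a.1 <+: b.1)
            (fun a b : {l : List lam // l ∈ T j} => a.1 <+: b.1) := by
  exact ⟨descTree, fun i => ⟨descTree_subtree i, descTree_special i⟩,
    fun _ _ hij => descTree_not_backForth hij⟩
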